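/- Suppose (X, τ) is a Choquet topological space, B ⊆ 𝒫(X) is a base for τ which is closed under finite intersections, and B₀ ⊆ B. Then there exists B₁ with B₀ ⊆ B₁ ⊆ B such that the cardinality of B₁ is at most (cardinality of B₀) + ℵ₀ and the space (X, τ_{B₁}) is Choquet, where τ_{B₁} is the topology on X generated by B₁. -/

import Mathlib

/-- The history (most recent move first) of player A's first `n` moves in the
Choquet game, a move being an open set. -/
def chHist {X : Type*} (f : ℕ → Set X) : ℕ → List (Set X)
  | 0 => []
  | n + 1 => f n :: chHist f n

/-- Legality of a history of moves of player A (most recent first) in the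
Choquet game on `X` with topology `t`, when player B plays according to the
strategy `σ`: each move must be a nonempty `t`-open set contained in B's
previous move (`σ` applied to the previous history). -/
def ChLegal {X : Type*} (t : TopologicalSpace X)
    (σ : List (Set X) → Set X) : List (Set X) → Prop
  | [] => True
  | U :: rest =>
      ChLegal t σ rest ∧ t.IsOpen U ∧ U.Nonempty ∧ (rest ≠ [] → U ⊆ σ rest)

/-- `(X, t)` is a Choquet space: player B has a winning strategy in the
Choquet game.  A strategy assigns to each history of A's moves a set for B; it
is winning if B's moves are always legal (nonempty open `Vₙ ⊆ Uₙ`) and every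
infinite legal play has nonempty intersection `⋂ₙ Vₙ`. -/
def IsChoquet {X : Type*} (t : TopologicalSpace X) : Prop :=
  ∃ σ : List (Set X) → Set X,
    (∀ (U : Set X) (rest : List (Set X)),
        ChLegal t σ (U :: rest) →
          t.IsOpen (σ (U :: rest)) ∧ (σ (U :: rest)).Nonempty ∧
            σ (U :: rest) ⊆ U) ∧
    (∀ f : ℕ → Set X, (∀ n : ℕ, ChLegal t σ (chHist f n)) →
        (⋂ n : ℕ, σ (chHist f (n + 1))).Nonempty)

/-- given a Choquet space `(X, τ)`, a basis `B` of `τ` closed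
under finite intersections and `B₀ ⊆ B`, there is `B₀ ⊆ B₁ ⊆ B` with
`|B₁| ≤ |B₀| + ℵ₀` such that the topology generated by `B₁` is Choquet. -/
theorem stmt_13 {X : Type*} (τ : TopologicalSpace X)
    (hCh : IsChoquet τ)
    (B : Set (Set X)) (hbase : @TopologicalSpace.IsTopologicalBasis X τ B)
    (hinter : ∀ s ∈ B, ∀ t ∈ B, s ∩ t ∈ B)
    (B₀ : Set (Set X)) (hB₀ : B₀ ⊆ B) :
    ∃ B₁ : Set (Set X), B₀ ⊆ B₁ ∧ B₁ ⊆ B ∧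
      Cardinal.mk ↥B₁ ≤ Cardinal.mk ↥B₀ + Cardinal.aleph0 ∧
      IsChoquet (TopologicalSpace.generateFrom B₁) := by
  classical
  letI : TopologicalSpace X := τ
  obtain ⟨σ, hσ1, hσ2⟩ := hCh
  rcases isEmpty_or_nonempty X with hX | hX
  · refine ⟨B₀, subset_rfl, hB₀, self_le_add_right _ _, ⟨fun _ => ∅, ?_, ?_⟩⟩
    · intro U rest h
      obtain ⟨x, -⟩ := h.2.2.1
      exact (IsEmpty.false x).elim
    · intro f hf
      obtain ⟨x, -⟩ := (hf 1).2.2.1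
      exact (IsEmpty.false x).elim
  obtain ⟨x0⟩ := hX
  have hBopen : ∀ s ∈ B, τ.IsOpen s := fun s hs => hbase.isOpen hs
  have hBne : ∃ b, b ∈ B ∧ b.Nonempty ∧ b ⊆ (Set.univ : Set X) := by
    have : x0 ∈ ⋃₀ B := by rw [hbase.sUnion_eq]; trivial
    obtain ⟨b, hb, hxb⟩ := this
    exact ⟨b, hb, ⟨x0, hxb⟩, Set.subset_univ b⟩
  let pick : Set X → Set X := fun V =>
    if h : ∃ b, b ∈ B ∧ b.Nonempty ∧ b ⊆ V then h.choose else hBne.choose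
  have pick_mem : ∀ V, pick V ∈ B := by
    intro V
    simp only [pick]
    split
    · next h => exact h.choose_spec.1
    · exact hBne.choose_spec.1
  have pick_spec : ∀ V, τ.IsOpen V → V.Nonempty → (pick V).Nonempty ∧ pick V ⊆ V := by
    intro V hV hne
    obtain ⟨x, hx⟩ := hne
    obtain ⟨b, hbB, hxb, hbV⟩ := hbase.exists_subset_of_mem_open hx hV
    have hex : ∃ b, b ∈ B ∧ b.Nonempty ∧ b ⊆ V := ⟨b, hbB, ⟨x, hxb⟩, hbV⟩
    simp only [pick]
    rw [dif_pos hex]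
    exact ⟨hex.choose_spec.2.1, hex.choose_spec.2.2⟩
  let σ' : List (Set X) → Set X := fun l => pick (σ l)
  -- L1 : σ'-legality implies σ-legality, and σ' behaves well
  have L1 : ∀ l : List (Set X), ChLegal τ σ' l →
      ChLegal τ σ l ∧ (l ≠ [] → (σ' l).Nonempty ∧ σ' l ⊆ σ l) := by
    intro l
    induction l with
    | nil => exact fun _ => ⟨trivial, fun h => absurd rfl h⟩
    | cons U rest ih =>
      intro hleg
      obtain ⟨hrest, hUo, hUne, hUsub⟩ := hleg
      obtain ⟨hrestσ, hrest2⟩ := ih hrest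
      have hlegσ : ChLegal τ σ (U :: rest) :=
        ⟨hrestσ, hUo, hUne, fun hne => (hUsub hne).trans (hrest2 hne).2⟩
      have h1 := hσ1 U rest hlegσ
      have h2 := pick_spec _ h1.1 h1.2.1
      exact ⟨hlegσ, fun _ => h2⟩
  -- the closure construction
  let F : Set (Set X) → Set (Set X) := fun S =>
    (S ∪ (fun p : Set X × Set X => p.1 ∩ p.2) '' (S ×ˢ S)) ∪
      σ' '' {l : List (Set X) | ∀ x ∈ l, x ∈ insert Set.univ S}
  let Sn : ℕ → Set (Set X) := fun n => F^[n] B₀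
  have hSsucc : ∀ n, Sn (n + 1) = F (Sn n) := fun n => Function.iterate_succ_apply' F n B₀
  have hSsub : ∀ n, Sn n ⊆ Sn (n + 1) := by
    intro n
    rw [hSsucc]
    exact fun s hs => Or.inl (Or.inl hs)
  have hSmono : ∀ m n, m ≤ n → Sn m ⊆ Sn n := by
    intro m n h
    induction n, h using Nat.le_induction with
    | base => exact subset_rfl
    | succ n hn ih => exact ih.trans (hSsub n)
  let B₁ : Set (Set X) := ⋃ n, Sn n
  have hSB : ∀ n, Sn n ⊆ B := by
    intro n
    induction n with
    | zero => exact hB₀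
    | succ n ih =>
      rw [hSsucc]
      rintro s ((hs | ⟨⟨a, b⟩, hab, rfl⟩) | ⟨l, -, rfl⟩)
      · exact ih hs
      · exact hinter a (ih hab.1) b (ih hab.2)
      · exact pick_mem _
  have hB₁B : B₁ ⊆ B := Set.iUnion_subset hSB
  have hB₀B₁ : B₀ ⊆ B₁ := Set.subset_iUnion Sn 0
  have hB₁inter : ∀ s ∈ B₁, ∀ t ∈ B₁, s ∩ t ∈ B₁ := by
    intro s hs t ht
    obtain ⟨m, hm⟩ := Set.mem_iUnion.1 hs
    obtain ⟨n, hn⟩ := Set.mem_iUnion.1 ht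
    refine Set.mem_iUnion.2 ⟨max m n + 1, ?_⟩
    rw [hSsucc]
    exact Or.inl (Or.inr ⟨(s, t), ⟨hSmono _ _ (le_max_left _ _) hm,
      hSmono _ _ (le_max_right _ _) hn⟩, rfl⟩)
  have hB₁σ : ∀ l : List (Set X), (∀ x ∈ l, x ∈ insert Set.univ B₁) → σ' l ∈ B₁ := by
    intro l hl
    have hN : ∃ N, ∀ x ∈ l, x ∈ insert Set.univ (Sn N) := by
      induction l with
      | nil => exact ⟨0, by simp⟩
      | cons a l ih =>
        obtain ⟨N, hNl⟩ := ih (fun x hx => hl x (List.mem_cons_of_mem _ hx))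
        rcases Set.mem_insert_iff.1 (hl a List.mem_cons_self) with rfl | ha
        · refine ⟨N, fun x hx => ?_⟩
          rcases List.mem_cons.1 hx with rfl | hx
          · exact Set.mem_insert _ _
          · exact hNl x hx
        · obtain ⟨m, hm⟩ := Set.mem_iUnion.1 ha
          refine ⟨max N m, fun x hx => ?_⟩
          rcases List.mem_cons.1 hx with rfl | hx
          · exact Set.mem_insert_iff.2 (Or.inr (hSmono _ _ (le_max_right _ _) hm))
          · rcases Set.mem_insert_iff.1 (hNl x hx) with rfl | h
            · exact Set.mem_insert _ _
            · exact Set.mem_insert_iff.2 (Or.inr (hSmono _ _ (le_max_left _ _) h))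
    obtain ⟨N, hN⟩ := hN
    refine Set.mem_iUnion.2 ⟨N + 1, ?_⟩
    rw [hSsucc]
    exact Or.inr ⟨l, hN, rfl⟩
  -- cardinality bound
  have hκinf : Cardinal.aleph0 ≤ Cardinal.mk ↥B₀ + Cardinal.aleph0 := le_add_self
  have hcardS : ∀ n, Cardinal.mk ↥(Sn n) ≤ Cardinal.mk ↥B₀ + Cardinal.aleph0 := by
    intro n
    induction n with
    | zero => exact self_le_add_right _ _
    | succ n ih =>
      rw [hSsucc]
      refine le_trans (Cardinal.mk_union_le _ _) ?_
      have h1 : Cardinal.mk ↥((fun p : Set X × Set X => p.1 ∩ p.2) '' (Sn n ×ˢ Sn n)) ≤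
          Cardinal.mk ↥B₀ + Cardinal.aleph0 := by
        refine le_trans (Cardinal.mk_image_le) ?_
        have : Cardinal.mk ↥(Sn n ×ˢ Sn n) = Cardinal.mk ↥(Sn n) * Cardinal.mk ↥(Sn n) := by
          rw [Cardinal.mk_congr (Equiv.Set.prod _ _)]
          simp [Cardinal.mk_prod]
        rw [this]
        calc Cardinal.mk ↥(Sn n) * Cardinal.mk ↥(Sn n)
            ≤ (Cardinal.mk ↥B₀ + Cardinal.aleph0) * (Cardinal.mk ↥B₀ + Cardinal.aleph0) :=
              mul_le_mul' ih ih
          _ = _ := Cardinal.mul_eq_self hκinf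
      have h2 : Cardinal.mk ↥(σ' '' {l : List (Set X) | ∀ x ∈ l, x ∈ insert Set.univ (Sn n)}) ≤
          Cardinal.mk ↥B₀ + Cardinal.aleph0 := by
        refine le_trans (Cardinal.mk_image_le) ?_
        set T : Set (Set X) := insert Set.univ (Sn n) with hT
        haveI : Nonempty ↥T := ⟨⟨Set.univ, Set.mem_insert _ _⟩⟩
        have hsurj : Function.Surjective (fun l : List ↥T =>
            (⟨l.map Subtype.val, by
              intro x hx
              obtain ⟨y, hy, rfl⟩ := List.mem_map.1 hx
              exact y.2⟩ : {l : List (Set X) // ∀ x ∈ l, x ∈ T})) := by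
          rintro ⟨l, hl⟩
          refine ⟨l.attach.map (fun x => ⟨x.1, hl x.1 x.2⟩), ?_⟩
          ext1
          simp [List.map_map, Function.comp]
        refine le_trans (Cardinal.mk_le_of_surjective hsurj) ?_
        rw [Cardinal.mk_list_eq_max_mk_aleph0]
        refine max_le ?_ hκinf
        calc Cardinal.mk ↥T ≤ Cardinal.mk ↥(Sn n) + 1 := Cardinal.mk_insert_le
          _ ≤ (Cardinal.mk ↥B₀ + Cardinal.aleph0) + (Cardinal.mk ↥B₀ + Cardinal.aleph0) :=
              add_le_add ih (le_trans Cardinal.one_le_aleph0 hκinf)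
          _ = _ := Cardinal.add_eq_self hκinf
      calc Cardinal.mk ↥(Sn n ∪ (fun p : Set X × Set X => p.1 ∩ p.2) '' (Sn n ×ˢ Sn n)) +
            Cardinal.mk ↥(σ' '' {l : List (Set X) | ∀ x ∈ l, x ∈ insert Set.univ (Sn n)})
          ≤ (Cardinal.mk ↥(Sn n) + Cardinal.mk ↥((fun p : Set X × Set X => p.1 ∩ p.2) ''
              (Sn n ×ˢ Sn n))) + Cardinal.mk ↥(σ' '' {l : List (Set X) | ∀ x ∈ l,
              x ∈ insert Set.univ (Sn n)}) := add_le_add_left (Cardinal.mk_union_le _ _) _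
        _ ≤ ((Cardinal.mk ↥B₀ + Cardinal.aleph0) + (Cardinal.mk ↥B₀ + Cardinal.aleph0)) +
              (Cardinal.mk ↥B₀ + Cardinal.aleph0) := add_le_add (add_le_add ih h1) h2
        _ = _ := by rw [Cardinal.add_eq_self hκinf, Cardinal.add_eq_self hκinf]
  have hcard : Cardinal.mk ↥B₁ ≤ Cardinal.mk ↥B₀ + Cardinal.aleph0 := by
    have hre : B₁ = ⋃ i : ULift.{_} ℕ, Sn i.down := by
      ext s
      simp only [B₁, Set.mem_iUnion]
      constructor
      · rintro ⟨n, hn⟩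
        exact ⟨⟨n⟩, hn⟩
      · rintro ⟨n, hn⟩
        exact ⟨n.down, hn⟩
    rw [hre]
    refine le_trans (Cardinal.mk_iUnion_le _) ?_
    have h1 : Cardinal.mk (ULift.{_} ℕ) = Cardinal.aleph0 := Cardinal.mk_denumerable _
    have h2 : (⨆ i : ULift.{_} ℕ, Cardinal.mk ↥(Sn i.down)) ≤
        Cardinal.mk ↥B₀ + Cardinal.aleph0 := ciSup_le' (fun i => hcardS i.down)
    calc Cardinal.mk (ULift.{_} ℕ) * ⨆ i : ULift.{_} ℕ, Cardinal.mk ↥(Sn i.down)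
        ≤ Cardinal.aleph0 * (Cardinal.mk ↥B₀ + Cardinal.aleph0) := by
          rw [h1]; exact mul_le_mul_right h2 _
      _ = _ := Cardinal.aleph0_mul_eq hκinf
  -- the generated topology is Choquet
  have key : ∀ U, TopologicalSpace.GenerateOpen B₁ U → ∀ x ∈ U,
      ∃ b ∈ insert Set.univ B₁, x ∈ b ∧ b ⊆ U := by
    intro U hU
    induction hU with
    | basic s hs => exact fun x hx => ⟨s, Set.mem_insert_of_mem _ hs, hx, subset_rfl⟩
    | univ => exact fun x hx => ⟨Set.univ, Set.mem_insert _ _, hx, subset_rfl⟩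
    | inter s t hs ht ihs iht =>
      intro x hx
      obtain ⟨b1, hb1, hxb1, hb1s⟩ := ihs x hx.1
      obtain ⟨b2, hb2, hxb2, hb2t⟩ := iht x hx.2
      rcases Set.mem_insert_iff.1 hb1 with rfl | hb1
      · exact ⟨b2, hb2, hxb2, fun y hy => ⟨hb1s (Set.mem_univ y), hb2t hy⟩⟩
      rcases Set.mem_insert_iff.1 hb2 with rfl | hb2
      · exact ⟨b1, Set.mem_insert_of_mem _ hb1, hxb1,
          fun y hy => ⟨hb1s hy, hb2t (Set.mem_univ y)⟩⟩
      exact ⟨b1 ∩ b2, Set.mem_insert_of_mem _ (hB₁inter b1 hb1 b2 hb2), ⟨hxb1, hxb2⟩,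
        fun y hy => ⟨hb1s hy.1, hb2t hy.2⟩⟩
    | sUnion S hS ih =>
      intro x hx
      obtain ⟨s, hsS, hxs⟩ := hx
      obtain ⟨b, hb, hxb, hbs⟩ := ih s hsS x hxs
      exact ⟨b, hb, hxb, hbs.trans (Set.subset_sUnion_of_mem hsS)⟩
  let shr : Set X → Set X := fun U =>
    if hex : ∃ b, b ∈ insert Set.univ B₁ ∧ b.Nonempty ∧ b ⊆ U then hex.choose else Set.univ
  have shr_spec : ∀ U, TopologicalSpace.GenerateOpen B₁ U → U.Nonempty →
      shr U ∈ insert Set.univ B₁ ∧ (shr U).Nonempty ∧ shr U ⊆ U := by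
    intro U hU hne
    obtain ⟨x, hx⟩ := hne
    obtain ⟨b, hb, hxb, hbU⟩ := key U hU x hx
    have hex : ∃ b, b ∈ insert Set.univ B₁ ∧ b.Nonempty ∧ b ⊆ U := ⟨b, hb, ⟨x, hxb⟩, hbU⟩
    simp only [shr]
    rw [dif_pos hex]
    exact hex.choose_spec
  have hopen' : ∀ b ∈ insert Set.univ B₁, τ.IsOpen b := by
    intro b hb
    rcases Set.mem_insert_iff.1 hb with rfl | hb
    · exact isOpen_univ
    · exact hBopen b (hB₁B hb)
  let σ₁ : List (Set X) → Set X := fun l => σ' (l.map shr)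
  have L2 : ∀ l : List (Set X), ChLegal (TopologicalSpace.generateFrom B₁) σ₁ l →
      ChLegal τ σ' (l.map shr) ∧ ∀ x ∈ l.map shr, x ∈ insert Set.univ B₁ := by
    intro l
    induction l with
    | nil => exact fun _ => ⟨trivial, by simp⟩
    | cons U rest ih =>
      intro hleg
      obtain ⟨hrest, hUo, hUne, hUsub⟩ := hleg
      obtain ⟨hrest', hmem⟩ := ih hrest
      obtain ⟨hshB, hshne, hshsub⟩ := shr_spec U hUo hUne
      refine ⟨⟨hrest', hopen' _ hshB, hshne, fun hne => ?_⟩, ?_⟩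
      · have hrne : rest ≠ [] := by
          intro h
          rw [h] at hne
          exact hne rfl
        exact hshsub.trans (hUsub hrne)
      · intro x hx
        rcases List.mem_cons.1 hx with rfl | hx
        · exact hshB
        · exact hmem x hx
  have bullet1 : ∀ (U : Set X) (rest : List (Set X)),
      ChLegal (TopologicalSpace.generateFrom B₁) σ₁ (U :: rest) →
        (TopologicalSpace.generateFrom B₁).IsOpen (σ₁ (U :: rest)) ∧
          (σ₁ (U :: rest)).Nonempty ∧ σ₁ (U :: rest) ⊆ U := by
    intro U rest hleg
    obtain ⟨hleg', hmem⟩ := L2 _ hleg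
    have hmemB₁ : σ' ((U :: rest).map shr) ∈ B₁ := hB₁σ _ hmem
    have hL1 := L1 _ hleg'
    have h2 := hL1.2 (by simp)
    have h3 := hσ1 (shr U) (rest.map shr) hL1.1
    have hshr := shr_spec U hleg.2.1 hleg.2.2.1
    refine ⟨TopologicalSpace.GenerateOpen.basic _ hmemB₁, h2.1, ?_⟩
    exact h2.2.trans (h3.2.2.trans hshr.2.2)
  have hmapchHist : ∀ (f : ℕ → Set X) (n : ℕ),
      (chHist f n).map shr = chHist (fun k => shr (f k)) n := by
    intro f n
    induction n with
    | zero => rfl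
    | succ n ih => simp [chHist, ih]
  have bullet2 : ∀ f : ℕ → Set X,
      (∀ n, ChLegal (TopologicalSpace.generateFrom B₁) σ₁ (chHist f n)) →
      (⋂ n, σ₁ (chHist f (n + 1))).Nonempty := by
    intro f hf
    set g : ℕ → Set X := fun k => shr (f k) with hg
    have hgleg : ∀ n, ChLegal τ σ' (chHist g n) := by
      intro n
      have h := (L2 _ (hf n)).1
      rwa [hmapchHist] at h
    have hglegσ : ∀ n, ChLegal τ σ (chHist g n) := fun n => (L1 _ (hgleg n)).1
    obtain ⟨x, hx⟩ := hσ2 g hglegσ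
    refine ⟨x, Set.mem_iInter.2 fun n => ?_⟩
    have hx2 : x ∈ σ (chHist g (n + 2)) := Set.mem_iInter.1 hx (n + 1)
    have hsub1 : σ (chHist g (n + 2)) ⊆ g (n + 1) :=
      (hσ1 (g (n + 1)) (chHist g (n + 1)) (hglegσ (n + 2))).2.2
    have hsub2 : g (n + 1) ⊆ σ' (chHist g (n + 1)) :=
      (hgleg (n + 2)).2.2.2 (List.cons_ne_nil _ _)
    have heq : σ₁ (chHist f (n + 1)) = σ' (chHist g (n + 1)) := by
      show σ' ((chHist f (n + 1)).map shr) = σ' (chHist g (n + 1))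
      rw [hmapchHist]
    rw [heq]
    exact hsub2 (hsub1 hx2)
  exact ⟨B₁, hB₀B₁, hB₁B, hcard, σ₁, bullet1, bullet2⟩
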